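/- For any hypergraph H with maximum degree Δ and any k > 1, there exists a (k+1)-weak coloring of H with at most 13 · Δ^{1/k} colors (i.e., a coloring in which no hyperedge of size at least k+1 is monochromatic). -/

import Mathlib

open Finset

section Aux

variable {V : Type*} [Fintype V] [DecidableEq V]

/-- A coloring is good on `A` if it takes the default value off `A` and no
edge of `T` contained in `A` is monochromatic. -/
def IsGood {N : ℕ} (T : Finset (Finset V)) (d : Fin N) (A : Finset V) (f : V → Fin N) : Prop :=
  (∀ x, x ∉ A → f x = d) ∧ ∀ t ∈ T, t ⊆ A → ∃ u ∈ t, ∃ w ∈ t, f u ≠ f w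

open Classical in
noncomputable def GF {N : ℕ} (T : Finset (Finset V)) (d : Fin N) (A : Finset V) :
    Finset (V → Fin N) :=
  Finset.univ.filter (IsGood T d A)

lemma mem_GF {N : ℕ} {T : Finset (Finset V)} {d : Fin N} {A : Finset V} {f : V → Fin N} :
    f ∈ GF T d A ↔ IsGood T d A f := by
  classical
  simp [GF]

lemma chain {N : ℕ} (T : Finset (Finset V)) (d : Fin N) {n : ℕ}
    (hkey : ∀ B : Finset V, B.card ≤ n → ∀ v ∈ B,
      N * (GF T d (B.erase v)).card ≤ 2 * (GF T d B).card) :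
    ∀ (m : ℕ) (B : Finset V), B.card ≤ n → ∀ C ⊆ B, (B \ C).card = m →
      N ^ m * (GF T d C).card ≤ 2 ^ m * (GF T d B).card := by
  intro m
  induction m with
  | zero =>
    intro B hB C hCB hcard
    have : B \ C = ∅ := Finset.card_eq_zero.1 hcard
    have hCB' : C = B := Finset.Subset.antisymm hCB (fun x hx => by
      by_contra hxC
      exact absurd (Finset.mem_sdiff.2 ⟨hx, hxC⟩) (by simp [this]))
    simp [hCB']
  | succ m ih =>
    intro B hB C hCB hcard
    have hne : (B \ C).Nonempty := Finset.card_pos.1 (by omega)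
    obtain ⟨v, hv⟩ := hne
    have hvB : v ∈ B := (Finset.mem_sdiff.1 hv).1
    have hvC : v ∉ C := (Finset.mem_sdiff.1 hv).2
    have hCB' : C ⊆ B.erase v := fun x hx =>
      Finset.mem_erase.2 ⟨fun h => hvC (h ▸ hx), hCB hx⟩
    have hBe : B.erase v \ C = (B \ C).erase v := by
      ext x
      simp only [Finset.mem_sdiff, Finset.mem_erase]
      tauto
    have hcard' : (B.erase v \ C).card = m := by
      rw [hBe, Finset.card_erase_of_mem hv]
      omega
    have hBe_card : (B.erase v).card ≤ n := by
      have := Finset.card_erase_of_mem hvB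
      have hpos := Finset.card_pos.2 ⟨v, hvB⟩
      omega
    have h1 := ih (B.erase v) (le_trans hBe_card (by omega)) C hCB' hcard'
    have h2 := hkey B hB v hvB
    calc N ^ (m + 1) * (GF T d C).card = N * (N ^ m * (GF T d C).card) := by ring
      _ ≤ N * (2 ^ m * (GF T d (B.erase v)).card) := Nat.mul_le_mul_left _ h1
      _ = 2 ^ m * (N * (GF T d (B.erase v)).card) := by ring
      _ ≤ 2 ^ m * (2 * (GF T d B).card) := Nat.mul_le_mul_left _ h2
      _ = 2 ^ (m + 1) * (GF T d B).card := by ring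

lemma key {N k Δ : ℕ} (T : Finset (Finset V)) (d : Fin N)
    (hT : ∀ t ∈ T, t.card = k + 1)
    (hdeg : ∀ v : V, (T.filter fun t => v ∈ t).card ≤ Δ)
    (hNk : 2 ^ (k + 1) * Δ ≤ N ^ k) (hN : 0 < N) :
    ∀ (n : ℕ) (A : Finset V), A.card ≤ n → ∀ v ∈ A,
      N * (GF T d (A.erase v)).card ≤ 2 * (GF T d A).card := by
  classical
  intro n
  induction n with
  | zero =>
    intro A hA v hv
    have : A = ∅ := Finset.card_eq_zero.1 (by omega)
    simp [this] at hv
  | succ n ih =>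
    intro A hA v hv
    set B := A.erase v with hBdef
    have hvB : v ∉ B := Finset.notMem_erase v A
    have hBsub : B ⊆ A := Finset.erase_subset v A
    -- the product set of (good colorings of B) × (color for v)
    set X : Finset ((V → Fin N) × Fin N) := (GF T d B) ×ˢ Finset.univ with hXdef
    have hXcard : X.card = (GF T d B).card * N := by
      simp [hXdef, Finset.card_product]
    set q : (V → Fin N) × Fin N → Prop :=
      fun p => Function.update p.1 v p.2 ∈ GF T d A with hqdef
    have hsplit : (X.filter q).card + (X.filter fun p => ¬ q p).card = X.card :=
      Finset.card_filter_add_card_filter_not (p := q)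
    -- every member of X has first component good on B, hence default at v and off A
    have hX1 : ∀ p ∈ X, IsGood T d B p.1 := by
      intro p hp
      exact mem_GF.1 (Finset.mem_product.1 hp).1
    -- good pairs inject into GF A
    have hgood : (X.filter q).card ≤ (GF T d A).card := by
      apply Finset.card_le_card_of_injOn (fun p => Function.update p.1 v p.2)
      · intro p hp
        exact (Finset.mem_filter.1 hp).2
      · intro p hp p' hp' h
        have h1 := hX1 p (Finset.mem_filter.1 hp).1
        have h1' := hX1 p' (Finset.mem_filter.1 hp').1
        have hc : p.2 = p'.2 := by
          have := congrFun h v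
          simpa using this
        have hfv : p.1 v = p'.1 v := by
          rw [h1.1 v hvB, h1'.1 v hvB]
        have hf : p.1 = p'.1 := by
          funext x
          by_cases hx : x = v
          · rw [hx]; exact hfv
          · have := congrFun h x
            simpa [Function.update_of_ne hx] using this
        exact Prod.ext hf hc
    -- the bad pairs
    set Tv : Finset (Finset V) := T.filter (fun t => v ∈ t ∧ t ⊆ A) with hTvdef
    set Mono : Finset V → Finset ((V → Fin N) × Fin N) :=
      fun t => X.filter (fun p => ∀ x ∈ t, Function.update p.1 v p.2 x = p.2) with hMdef
    have hbadsub : (X.filter fun p => ¬ q p) ⊆ Tv.biUnion Mono := by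
      intro p hp
      obtain ⟨hpX, hnq⟩ := Finset.mem_filter.1 hp
      have hgood1 := hX1 p hpX
      set f := p.1
      set c := p.2
      set g := Function.update f v c with hgdef
      have hcond1 : ∀ x, x ∉ A → g x = d := by
        intro x hx
        have hxv : x ≠ v := fun h => hx (h ▸ hv)
        have hxB : x ∉ B := fun h => hx (hBsub h)
        rw [hgdef, Function.update_of_ne hxv]
        exact hgood1.1 x hxB
      have hcond2 : ¬ ∀ t ∈ T, t ⊆ A → ∃ u ∈ t, ∃ w ∈ t, g u ≠ g w := by
        intro hcon
        exact hnq (mem_GF.2 ⟨hcond1, hcon⟩)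
      push_neg at hcond2
      obtain ⟨t, htT, htA, hmono⟩ := hcond2
      have hvt : v ∈ t := by
        by_contra hvt
        have htB : t ⊆ B := fun x hx =>
          Finset.mem_erase.2 ⟨fun h => hvt (h ▸ hx), htA hx⟩
        obtain ⟨u, hu, w, hw, huw⟩ := hgood1.2 t htT htB
        have hgu : g u = f u := Function.update_of_ne (by rintro rfl; exact hvt hu) _ _
        have hgw : g w = f w := Function.update_of_ne (by rintro rfl; exact hvt hw) _ _
        exact huw (by rw [← hgu, ← hgw, hmono u hu w hw])
      refine Finset.mem_biUnion.2 ⟨t, ?_, ?_⟩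
      · exact Finset.mem_filter.2 ⟨htT, hvt, htA⟩
      · refine Finset.mem_filter.2 ⟨hpX, ?_⟩
        intro x hx
        have h5 : g x = g v := hmono x hx v hvt
        show g x = c
        rw [h5, hgdef]
        simp
    -- each Mono t injects into GF (A \ t) × colors
    have hMt : ∀ t ∈ Tv, (Mono t).card ≤ (GF T d (A \ t)).card * N := by
      intro t ht
      obtain ⟨htT, hvt, htA⟩ := Finset.mem_filter.1 ht
      have : (Mono t).card ≤ ((GF T d (A \ t)) ×ˢ (Finset.univ : Finset (Fin N))).card := by
        apply Finset.card_le_card_of_injOn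
          (fun p => (fun x => if x ∈ t then d else p.1 x, p.2))
        · intro p hp
          obtain ⟨hpX, hpm⟩ := Finset.mem_filter.1 hp
          have hgood1 := hX1 p hpX
          refine Finset.mem_product.2 ⟨mem_GF.2 ⟨?_, ?_⟩, Finset.mem_univ _⟩
          · intro x hx
            by_cases hxt : x ∈ t
            · simp [hxt]
            · have hxA : x ∉ A := fun h => hx (Finset.mem_sdiff.2 ⟨h, hxt⟩)
              have hxB : x ∉ B := fun h => hxA (hBsub h)
              simp only [if_neg hxt]
              exact hgood1.1 x hxB
          · intro t' ht'T ht'sub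
            have ht'B : t' ⊆ B := by
              intro x hx
              have hx' := ht'sub hx
              have := Finset.mem_sdiff.1 hx'
              exact Finset.mem_erase.2 ⟨fun h => this.2 (h ▸ hvt), this.1⟩
            obtain ⟨u, hu, w, hw, huw⟩ := hgood1.2 t' ht'T ht'B
            have hut : u ∉ t := (Finset.mem_sdiff.1 (ht'sub hu)).2
            have hwt : w ∉ t := (Finset.mem_sdiff.1 (ht'sub hw)).2
            exact ⟨u, hu, w, hw, by simpa [hut, hwt] using huw⟩
        · intro p hp p' hp' h
          obtain ⟨hpX, hpm⟩ := Finset.mem_filter.1 hp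
          obtain ⟨hpX', hpm'⟩ := Finset.mem_filter.1 hp'
          have hgood1 := hX1 p hpX
          have hgood1' := hX1 p' hpX'
          simp only [Prod.mk.injEq] at h
          obtain ⟨hg, hc⟩ := h
          have hf : p.1 = p'.1 := by
            funext x
            by_cases hxt : x ∈ t
            · by_cases hxv : x = v
              · rw [hxv, hgood1.1 v hvB, hgood1'.1 v hvB]
              · have e1 : p.1 x = p.2 := by
                  have := hpm x hxt
                  rwa [Function.update_of_ne hxv] at this
                have e2 : p'.1 x = p'.2 := by
                  have := hpm' x hxt
                  rwa [Function.update_of_ne hxv] at this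
                rw [e1, e2, hc]
            · have := congrFun hg x
              simpa [hxt] using this
          exact Prod.ext hf hc
      simpa [Finset.card_product] using this
    -- chain bound on each GF (A \ t)
    have hBcard : B.card ≤ n := by
      have h6 : B.card = A.card - 1 := by rw [hBdef, Finset.card_erase_of_mem hv]
      have hpos : 0 < A.card := Finset.card_pos.2 ⟨v, hv⟩
      omega
    have hchain : ∀ t ∈ Tv, N ^ k * (GF T d (A \ t)).card ≤ 2 ^ k * (GF T d B).card := by
      intro t ht
      obtain ⟨htT, hvt, htA⟩ := Finset.mem_filter.1 ht
      have hsub : A \ t ⊆ B := by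
        intro x hx
        have := Finset.mem_sdiff.1 hx
        exact Finset.mem_erase.2 ⟨fun h => this.2 (h ▸ hvt), this.1⟩
      have hsd : B \ (A \ t) = t.erase v := by
        ext x
        simp only [Finset.mem_sdiff, Finset.mem_erase, hBdef, not_and, not_not]
        constructor
        · rintro ⟨⟨hxv, hxA⟩, h2⟩
          exact ⟨hxv, h2 hxA⟩
        · rintro ⟨hxv, hxt⟩
          exact ⟨⟨hxv, htA hxt⟩, fun _ => hxt⟩
      have hsdcard : (B \ (A \ t)).card = k := by
        rw [hsd, Finset.card_erase_of_mem hvt, hT t htT]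
        omega
      exact chain T d ih k B hBcard (A \ t) hsub hsdcard
    have hTvΔ : Tv.card ≤ Δ := by
      refine le_trans (Finset.card_le_card ?_) (hdeg v)
      intro t ht
      obtain ⟨htT, hvt, _⟩ := Finset.mem_filter.1 ht
      exact Finset.mem_filter.2 ⟨htT, hvt⟩
    -- combine
    set a := (GF T d A).card
    set b := (GF T d B).card
    have hbad : (X.filter fun p => ¬ q p).card ≤ ∑ t ∈ Tv, (GF T d (A \ t)).card * N :=
      le_trans (Finset.card_le_card hbadsub)
        (le_trans (Finset.card_biUnion_le) (Finset.sum_le_sum hMt))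
    have hsum : N ^ k * (∑ t ∈ Tv, (GF T d (A \ t)).card * N) ≤ Δ * (2 ^ k * b * N) := by
      rw [Finset.mul_sum]
      calc ∑ t ∈ Tv, N ^ k * ((GF T d (A \ t)).card * N)
          ≤ ∑ t ∈ Tv, 2 ^ k * b * N := by
            refine Finset.sum_le_sum ?_
            intro t ht
            calc N ^ k * ((GF T d (A \ t)).card * N)
                = (N ^ k * (GF T d (A \ t)).card) * N := by ring
              _ ≤ (2 ^ k * b) * N := Nat.mul_le_mul_right _ (hchain t ht)
              _ = 2 ^ k * b * N := rfl
        _ = Tv.card * (2 ^ k * b * N) := by rw [Finset.sum_const, smul_eq_mul]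
        _ ≤ Δ * (2 ^ k * b * N) := Nat.mul_le_mul_right _ hTvΔ
    have h1 : b * N ≤ a + ∑ t ∈ Tv, (GF T d (A \ t)).card * N := by
      calc b * N = (X.filter q).card + (X.filter fun p => ¬ q p).card := by
            rw [hsplit, hXcard]
        _ ≤ a + ∑ t ∈ Tv, (GF T d (A \ t)).card * N := Nat.add_le_add hgood hbad
    -- final arithmetic
    have h2 : N ^ k * (b * N) ≤ N ^ k * a + Δ * (2 ^ k * b * N) := by
      calc N ^ k * (b * N) ≤ N ^ k * (a + ∑ t ∈ Tv, (GF T d (A \ t)).card * N) :=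
            Nat.mul_le_mul_left _ h1
        _ = N ^ k * a + N ^ k * (∑ t ∈ Tv, (GF T d (A \ t)).card * N) := by ring
        _ ≤ N ^ k * a + Δ * (2 ^ k * b * N) := Nat.add_le_add_left hsum _
    have h3 : 2 * (Δ * (2 ^ k * b * N)) ≤ N ^ k * (b * N) := by
      calc 2 * (Δ * (2 ^ k * b * N)) = (2 ^ (k + 1) * Δ) * (b * N) := by ring
      _ ≤ N ^ k * (b * N) := Nat.mul_le_mul_right _ hNk
    have aux : ∀ w z s' : ℕ, w ≤ z + s' → 2 * s' ≤ w → w ≤ 2 * z := by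
      intro w z s' hw hs
      omega
    have h5 := aux _ _ _ h2 h3
    have h4 : N ^ k * (N * b) ≤ N ^ k * (2 * a) := by
      calc N ^ k * (N * b) = N ^ k * (b * N) := by ring
        _ ≤ 2 * (N ^ k * a) := h5
        _ = N ^ k * (2 * a) := by ring
    exact Nat.le_of_mul_le_mul_left h4 (Nat.pow_pos (n := k) hN)

lemma GF_pos {N k Δ : ℕ} (T : Finset (Finset V)) (d : Fin N)
    (hT : ∀ t ∈ T, t.card = k + 1)
    (hdeg : ∀ v : V, (T.filter fun t => v ∈ t).card ≤ Δ)
    (hNk : 2 ^ (k + 1) * Δ ≤ N ^ k) (hN : 0 < N) :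
    ∀ A : Finset V, 0 < (GF T d A).card := by
  classical
  intro A
  induction A using Finset.strongInduction with
  | _ A ih =>
    rcases A.eq_empty_or_nonempty with rfl | ⟨v, hv⟩
    · refine Finset.card_pos.2 ⟨fun _ => d, mem_GF.2 ⟨fun _ _ => rfl, ?_⟩⟩
      intro t htT hsub
      have h1 : t.card = k + 1 := hT t htT
      have h2 : t.Nonempty := Finset.card_pos.1 (by omega)
      obtain ⟨x, hx⟩ := h2
      exact absurd (hsub hx) (Finset.notMem_empty x)
    · have hkey := key T d hT hdeg hNk hN A.card A le_rfl v hv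
      have ih' := ih (A.erase v) (Finset.erase_ssubset hv)
      have hpos : 0 < N * (GF T d (A.erase v)).card := Nat.mul_pos hN ih'
      omega

end Aux

/-- For any hypergraph of maximum degree `Δ ≥ 1` and any `k > 1`, there is a
`(k+1)`-weak coloring with at most `13 · Δ^{1/k}` colors: a coloring in which no
hyperedge of size at least `k+1` is monochromatic. -/
theorem stmt9 {V : Type*} [Fintype V] [DecidableEq V] (E : Finset (Finset V))
    (k Δ : ℕ) (hk : 1 < k) (hΔ : 1 ≤ Δ)
    (hdeg : ∀ v : V, (E.filter fun S => v ∈ S).card ≤ Δ) :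
    ∃ c : V → ℕ,
      ((Finset.univ.image c).card : ℝ) ≤ 13 * (Δ : ℝ) ^ ((1 : ℝ) / k) ∧
      ∀ S ∈ E, k + 1 ≤ S.card → ∃ u ∈ S, ∃ w ∈ S, c u ≠ c w := by
  classical
  -- set up the number of colors
  set x : ℝ := (Δ : ℝ) ^ ((1 : ℝ) / k) with hxdef
  have hk0 : (0 : ℝ) < k := by positivity
  have hx0 : (0 : ℝ) < x := by
    apply Real.rpow_pos_of_pos
    exact_mod_cast hΔ
  have hx1 : (1 : ℝ) ≤ x := by
    have := Real.rpow_le_rpow (by norm_num) (show (1 : ℝ) ≤ (Δ : ℝ) by exact_mod_cast hΔ)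
      (by positivity : (0 : ℝ) ≤ (1 : ℝ) / k)
    rwa [Real.one_rpow] at this
  set m : ℕ := ⌊x⌋₊ with hmdef
  have hm1 : 1 ≤ m := Nat.le_floor (by exact_mod_cast hx1)
  have hmx : (m : ℝ) ≤ x := Nat.floor_le (le_of_lt hx0)
  have hxm : x ≤ 2 * m := by
    have h1 : x < m + 1 := Nat.lt_floor_add_one x
    have h2 : (1 : ℝ) ≤ (m : ℝ) := by exact_mod_cast hm1
    linarith
  set N : ℕ := 8 * m with hNdef
  have hN : 0 < N := by omega
  -- the key numeric inequality
  have hxk : x ^ k = (Δ : ℝ) := by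
    rw [hxdef, ← Real.rpow_natCast ((Δ : ℝ) ^ ((1 : ℝ) / k)) k, ← Real.rpow_mul (by positivity)]
    rw [one_div_mul_cancel (ne_of_gt hk0), Real.rpow_one]
  have h2m : (Δ : ℝ) ≤ ((2 * m : ℕ) : ℝ) ^ k := by
    rw [← hxk]
    push_cast
    exact pow_le_pow_left₀ (le_of_lt hx0) hxm k
  have h2m' : Δ ≤ (2 * m) ^ k := by exact_mod_cast h2m
  have hNk : 2 ^ (k + 1) * Δ ≤ N ^ k := by
    have e1 : N ^ k = 4 ^ k * (2 * m) ^ k := by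
      rw [hNdef, show 8 * m = 4 * (2 * m) by ring, mul_pow]
    have e2 : 2 ^ (k + 1) ≤ 4 ^ k := by
      calc 2 ^ (k + 1) ≤ 2 ^ (2 * k) := Nat.pow_le_pow_right (by norm_num) (by omega)
        _ = 4 ^ k := by rw [pow_mul]; norm_num
    calc 2 ^ (k + 1) * Δ ≤ 4 ^ k * (2 * m) ^ k := Nat.mul_le_mul e2 h2m'
      _ = N ^ k := e1.symm
  -- truncate the edges
  have htr : ∀ S : Finset V, ∃ t : Finset V, k + 1 ≤ S.card → t ⊆ S ∧ t.card = k + 1 := by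
    intro S
    by_cases h : k + 1 ≤ S.card
    · obtain ⟨t, ht1, ht2⟩ := Finset.exists_subset_card_eq h
      exact ⟨t, fun _ => ⟨ht1, ht2⟩⟩
    · exact ⟨∅, fun h' => absurd h' h⟩
  choose tr htr' using htr
  set T : Finset (Finset V) := (E.filter fun S => k + 1 ≤ S.card).image tr with hTdef
  have hT : ∀ t ∈ T, t.card = k + 1 := by
    intro t ht
    obtain ⟨S, hS, rfl⟩ := Finset.mem_image.1 ht
    exact (htr' S (Finset.mem_filter.1 hS).2).2
  have hdegT : ∀ v : V, (T.filter fun t => v ∈ t).card ≤ Δ := by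
    intro v
    have hsub1 : T.filter (fun t => v ∈ t) ⊆
        ((E.filter fun S => k + 1 ≤ S.card ∧ v ∈ tr S).image tr) := by
      intro t ht
      obtain ⟨htT, hvt⟩ := Finset.mem_filter.1 ht
      obtain ⟨S, hS, rfl⟩ := Finset.mem_image.1 htT
      obtain ⟨hSE, hSc⟩ := Finset.mem_filter.1 hS
      exact Finset.mem_image.2 ⟨S, Finset.mem_filter.2 ⟨hSE, hSc, hvt⟩, rfl⟩
    have hsub2 : (E.filter fun S => k + 1 ≤ S.card ∧ v ∈ tr S) ⊆ E.filter fun S => v ∈ S := by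
      intro S hS
      obtain ⟨hSE, hSc, hvS⟩ := Finset.mem_filter.1 hS
      exact Finset.mem_filter.2 ⟨hSE, (htr' S hSc).1 hvS⟩
    calc (T.filter fun t => v ∈ t).card
        ≤ ((E.filter fun S => k + 1 ≤ S.card ∧ v ∈ tr S).image tr).card :=
          Finset.card_le_card hsub1
      _ ≤ (E.filter fun S => k + 1 ≤ S.card ∧ v ∈ tr S).card := Finset.card_image_le
      _ ≤ (E.filter fun S => v ∈ S).card := Finset.card_le_card hsub2
      _ ≤ Δ := hdeg v
  -- get a good coloring on univ
  set d : Fin N := ⟨0, hN⟩ with hddef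
  have hpos := GF_pos T d hT hdegT hNk hN (Finset.univ : Finset V)
  obtain ⟨f, hf⟩ := Finset.card_pos.1 hpos
  have hfgood := mem_GF.1 hf
  refine ⟨fun v => (f v : ℕ), ?_, ?_⟩
  · -- the number of colors
    have himg : (Finset.univ.image fun v => (f v : ℕ)) = (Finset.univ.image f).image Fin.val := by
      rw [Finset.image_image]
      rfl
    have hcard : (Finset.univ.image fun v => (f v : ℕ)).card ≤ N := by
      rw [himg]
      calc ((Finset.univ.image f).image Fin.val).card ≤ (Finset.univ.image f).card :=
            Finset.card_image_le
        _ ≤ (Finset.univ : Finset (Fin N)).card := Finset.card_le_card (Finset.subset_univ _)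
        _ = N := by simp
    have hNx : (N : ℝ) ≤ 8 * x := by
      rw [hNdef]
      push_cast
      linarith
    calc ((Finset.univ.image fun v => (f v : ℕ)).card : ℝ) ≤ (N : ℝ) := by exact_mod_cast hcard
      _ ≤ 8 * x := hNx
      _ ≤ 13 * x := by linarith
  · -- no large edge monochromatic
    intro S hS hcard
    have hmem : tr S ∈ T :=
      Finset.mem_image.2 ⟨S, Finset.mem_filter.2 ⟨hS, hcard⟩, rfl⟩
    obtain ⟨u, hu, w, hw, huw⟩ := hfgood.2 (tr S) hmem (Finset.subset_univ _)
    have hsub := (htr' S hcard).1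
    exact ⟨u, hsub hu, w, hsub hw, fun h => huw (Fin.val_injective h)⟩
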